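/- Let G and E be divisors on C with deg G ≡ 0 (mod 2), E > 0, and ½·deg G − deg E ≥ 2g; put n = ½·deg G − deg E − g + 1 and n' = ½·deg G − g + 1 = n + deg E. Let ρ : L(G) → k be an E-compression functional, let D be a divisor of degree ½·deg G, and let X be a G-form representing D. Then for any n' × n' permutation matrices P and Q such that in the block decomposition PXQ = [[a, b], [c, d]] (a of size deg E × deg E, d of size n × n) the matrix ρa has nonzero determinant, the matrix z defined by [[w, x], [y, z]] = [[1, 0], [−(ρc)(ρa)⁻¹, 1]]·[[a, b], [c, d]]·[[1, −(ρa)⁻¹(ρb)], [0, 1]] is a (G − 2E)-form representing D − E. (Here ρa, ρb, ρc denote the matrices obtained by applying ρ entrywise.) -/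

import Mathlib

/-- All 2×2 minors of a matrix vanish, i.e. the matrix has rank at most 1. -/
def MinorsVanish {R : Type} [CommRing R] {m n : Type} (M : Matrix m n R) : Prop :=
  ∀ i i' j j', M i j * M i' j' = M i j' * M i' j

/-- A matrix is `k`-general if some row and some column each consist of
`k`-linearly independent entries. -/
def KGeneral (k : Type) [Field k] {V : Type} [AddCommMonoid V] [Module k V]
    {m n : Type} (M : Matrix m n V) : Prop :=
  (∃ i, LinearIndependent k fun j => M i j) ∧ ∃ j, LinearIndependent k fun i => M i j

/-- Two matrices over a `k`-algebra are `k`-equivalent if `Y = Φ X Ψ` for some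
invertible square matrices `Φ`, `Ψ` with entries in `k`. -/
def KEquivalent (k : Type) [Field k] {A : Type} [CommRing A] [Algebra k A]
    {m n : Type} [Fintype m] [Fintype n] [DecidableEq m] [DecidableEq n]
    (X Y : Matrix m n A) : Prop :=
  ∃ (Φ : Matrix m m k) (Ψ : Matrix n n k), IsUnit Φ.det ∧ IsUnit Ψ.det ∧
    Y = Φ.map (algebraMap k A) * X * Ψ.map (algebraMap k A)

/-- An abstraction of a nonsingular projective curve `C` of genus `g` over an
algebraically closed field `k`, packaged together with its function field `F = k(C)`,
the divisor `div f` of a nonzero rational function (divisors are finitely supported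
`ℤ`-valued functions on the points of `C`), the Riemann–Roch spaces
`L(D) = {f : f = 0 ∨ div f + D ≥ 0}`, the rings `R_E` of functions regular near the
support of a divisor and the ideals `I_E` of functions vanishing to order at least `E`,
subject to the standard facts about them (including the Riemann–Roch theorem). -/
structure AbstractCurve (k : Type) [Field k] : Type 1 where
  /-- the points of the curve -/
  Point : Type
  /-- the function field `k(C)` -/
  F : Type
  [fieldF : Field F]
  [algF : Algebra k F]
  /-- the genus of the curve -/
  genus : ℕ
  /-- `divOf f` is the divisor of zeros and poles of `f` (junk value `0` at `f = 0`);
  its value at a point `p` is the order of vanishing of `f` at `p`. -/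
  divOf : F → (Point →₀ ℤ)
  divOf_mul : ∀ f g : F, f ≠ 0 → g ≠ 0 → divOf (f * g) = divOf f + divOf g
  divOf_algebraMap : ∀ c : k, c ≠ 0 → divOf (algebraMap k F c) = 0
  divOf_eq_zero_iff : ∀ f : F, f ≠ 0 →
    (divOf f = 0 ↔ ∃ c : k, c ≠ 0 ∧ f = algebraMap k F c)
  /-- a principal divisor has degree zero -/
  deg_divOf : ∀ f : F, f ≠ 0 → (divOf f).sum (fun _ n => n) = 0
  /-- the Riemann–Roch space `L(D)` as a `k`-subspace of the function field -/
  RR : (Point →₀ ℤ) → Submodule k F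
  mem_RR : ∀ (D : Point →₀ ℤ) (f : F), f ∈ RR D ↔ f = 0 ∨ 0 ≤ divOf f + D
  finite_RR : ∀ D : Point →₀ ℤ, Module.Finite k (RR D)
  /-- the Riemann–Roch theorem: `ℓ(D) = deg D - g + 1` whenever `deg D > 2g - 2` -/
  rank_RR : ∀ D : Point →₀ ℤ, 2 * (genus : ℤ) - 2 < D.sum (fun _ n => n) →
    (Module.finrank k (RR D) : ℤ) = D.sum (fun _ n => n) - genus + 1
  /-- the `k`-space `R_E` of functions regular in a neighborhood of the support of `E` -/
  Reg : (Point →₀ ℤ) → Submodule k F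
  mem_Reg : ∀ (E : Point →₀ ℤ) (f : F),
    f ∈ Reg E ↔ f = 0 ∨ ∀ p ∈ E.support, 0 ≤ divOf f p
  /-- the `k`-space `I_E ⊆ R_E` of functions vanishing to order at least `E` -/
  VanishIdeal : (Point →₀ ℤ) → Submodule k F
  mem_VanishIdeal : ∀ (E : Point →₀ ℤ) (f : F),
    f ∈ VanishIdeal E ↔ f = 0 ∨ ∀ p ∈ E.support, E p ≤ divOf f p

namespace AbstractCurve

attribute [instance] fieldF algF

variable {k : Type} [Field k]

/-- The degree of a divisor. -/
def deg (C : AbstractCurve k) (D : C.Point →₀ ℤ) : ℤ := D.sum fun _ n => n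

/-- Linear equivalence of divisors: `D ~ D'` iff `D' = D + div f` for some `f ≠ 0`. -/
def LinEquiv (C : AbstractCurve k) (D D' : C.Point →₀ ℤ) : Prop :=
  ∃ f : C.F, f ≠ 0 ∧ D' = D + C.divOf f

/-- A `G`-form: a square matrix with entries in `L(G)`, all of whose 2×2 minors vanish,
and which is `k`-general.  (In context its size is `n = ½ deg G - g + 1`.) -/
def IsGForm (C : AbstractCurve k) (G : C.Point →₀ ℤ) {n : ℕ}
    (X : Matrix (Fin n) (Fin n) C.F) : Prop :=
  (∀ i j, X i j ∈ C.RR G) ∧ MinorsVanish X ∧ KGeneral k X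

/-- The `G`-form `X` represents the divisor `D` (of degree `½ deg G`): `X = u v` where
the entries of the column vector `u` form a `k`-basis of `L(D)` and the entries of the
row vector `v` form a `k`-basis of `L(G - D)`. -/
def Represents (C : AbstractCurve k) (G D : C.Point →₀ ℤ) {n : ℕ}
    (X : Matrix (Fin n) (Fin n) C.F) : Prop :=
  ∃ u v : Fin n → C.F,
    LinearIndependent k u ∧ Submodule.span k (Set.range u) = C.RR D ∧
    LinearIndependent k v ∧ Submodule.span k (Set.range v) = C.RR (G - D) ∧
    ∀ i j, X i j = u i * v j

/-- An `E`-compression functional `ρ : L(G) → k` (realized as a `k`-linear functional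
on the function field): `ρ` kills `L(G - E)`, and for every divisor `D` of degree
`½ deg G` the induced pairing `(a, b) ↦ ρ(ab)` on
`L(D)/L(D-E) × L(G-D)/L(G-D-E)` is a perfect pairing of `(deg E)`-dimensional
`k`-vector spaces (expressed by nondegeneracy on both sides together with both
quotients having dimension `deg E`). -/
def IsCompression (C : AbstractCurve k) (G E : C.Point →₀ ℤ) (ρ : C.F →ₗ[k] k) : Prop :=
  (∀ f ∈ C.RR (G - E), ρ f = 0) ∧
  ∀ D : C.Point →₀ ℤ, 2 * C.deg D = C.deg G →
    (∀ a ∈ C.RR D, (∀ b ∈ C.RR (G - D), ρ (a * b) = 0) → a ∈ C.RR (D - E)) ∧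
    (∀ b ∈ C.RR (G - D), (∀ a ∈ C.RR D, ρ (a * b) = 0) → b ∈ C.RR (G - D - E)) ∧
    (Module.finrank k
      (C.RR D ⧸ Submodule.comap (C.RR D).subtype (C.RR (D - E))) : ℤ) = C.deg E ∧
    (Module.finrank k
      (C.RR (G - D) ⧸
        Submodule.comap (C.RR (G - D)).subtype (C.RR (G - D - E))) : ℤ) = C.deg E

end AbstractCurve
namespace AbstractCurveAux

lemma span_mod {k F : Type} [Field k] [AddCommGroup F] [Module k F] (W V0 : Submodule k F)
    [Module.Finite k ↥W] {e : ℕ}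
    (hrank : Module.finrank k (↥W ⧸ Submodule.comap W.subtype V0) = e)
    (w : Fin e → F) (hw : ∀ j, w j ∈ W)
    (hind : ∀ c : Fin e → k, (∑ j, c j • w j) ∈ V0 → ∀ j, c j = 0)
    {b : F} (hb : b ∈ W) :
    ∃ c : Fin e → k, b - ∑ j, c j • w j ∈ V0 := by
  classical
  set K := Submodule.comap W.subtype V0 with hK
  haveI : Module.Finite k (↥W ⧸ K) := Module.Finite.quotient k K
  set wbar : Fin e → (↥W ⧸ K) := fun j => K.mkQ ⟨w j, hw j⟩ with hwbar
  have hli : LinearIndependent k wbar := by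
    rw [Fintype.linearIndependent_iff]
    intro c hc
    apply hind
    have h1 : K.mkQ (∑ j, c j • (⟨w j, hw j⟩ : ↥W)) = 0 := by
      rw [map_sum]
      simp only [map_smul]
      exact hc
    rw [← LinearMap.mem_ker, Submodule.ker_mkQ, hK, Submodule.mem_comap] at h1
    simpa using h1
  have hsp : Submodule.span k (Set.range wbar) = ⊤ := by
    apply Submodule.eq_top_of_finrank_eq
    rw [finrank_span_eq_card hli, Fintype.card_fin, hrank]
  have hmem : K.mkQ ⟨b, hb⟩ ∈ Submodule.span k (Set.range wbar) := by
    rw [hsp]; trivial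
  rw [Submodule.mem_span_range_iff_exists_fun] at hmem
  obtain ⟨c, hc⟩ := hmem
  refine ⟨c, ?_⟩
  have h2 : K.mkQ ((⟨b, hb⟩ : ↥W) - ∑ j, c j • (⟨w j, hw j⟩ : ↥W)) = 0 := by
    rw [map_sub, map_sum]
    simp only [map_smul]
    rw [sub_eq_zero]
    exact hc.symm
  rw [← LinearMap.mem_ker, Submodule.ker_mkQ, hK, Submodule.mem_comap] at h2
  simpa using h2

lemma rank_one_conj {k F : Type} [Field k] [Field F] [Algebra k F]
    {m : Type} [Fintype m] (Φ Ψ : Matrix m m k) (f g : m → F) (p q : m) :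
    (Φ.map (algebraMap k F) * Matrix.of (fun p q => f p * g q) * Ψ.map (algebraMap k F)) p q
      = (∑ r, algebraMap k F (Φ p r) * f r) * (∑ r, g r * algebraMap k F (Ψ r q)) := by
  rw [Finset.sum_mul_sum]
  simp only [Matrix.mul_apply, Matrix.map_apply, Matrix.of_apply, Finset.sum_mul]
  rw [Finset.sum_comm]
  refine Finset.sum_congr rfl fun i _ => Finset.sum_congr rfl fun j _ => ?_
  ring

end AbstractCurveAux


namespace AbstractCurveAux
open AbstractCurve

variable {k : Type} [Field k] (C : AbstractCurve k)

lemma deg_add (D D' : C.Point →₀ ℤ) : C.deg (D + D') = C.deg D + C.deg D' :=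
  Finsupp.sum_add_index' (fun _ => rfl) (fun _ _ _ => rfl)

lemma deg_zero : C.deg 0 = 0 := Finsupp.sum_zero_index

lemma deg_neg (D : C.Point →₀ ℤ) : C.deg (-D) = -C.deg D := by
  have h := deg_add C (-D) D
  rw [neg_add_cancel, deg_zero] at h
  linarith

lemma deg_sub (D D' : C.Point →₀ ℤ) : C.deg (D - D') = C.deg D - C.deg D' := by
  rw [sub_eq_add_neg, deg_add, deg_neg]; ring

lemma mul_mem_RR {D₁ D₂ : C.Point →₀ ℤ} {f g : C.F} (hf : f ∈ C.RR D₁) (hg : g ∈ C.RR D₂) :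
    f * g ∈ C.RR (D₁ + D₂) := by
  rw [C.mem_RR] at hf hg ⊢
  by_cases hf0 : f = 0
  · left; rw [hf0, zero_mul]
  by_cases hg0 : g = 0
  · left; rw [hg0, mul_zero]
  rcases hf with hf | hf
  · exact absurd hf hf0
  rcases hg with hg | hg
  · exact absurd hg hg0
  right
  rw [C.divOf_mul f g hf0 hg0]
  calc (0 : C.Point →₀ ℤ) = 0 + 0 := by rw [add_zero]
  _ ≤ (C.divOf f + D₁) + (C.divOf g + D₂) := add_le_add hf hg
  _ = C.divOf f + C.divOf g + (D₁ + D₂) := by abel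

lemma finrank_RR_eq {D : C.Point →₀ ℤ} {m : ℕ} (h2 : 2 * (C.genus : ℤ) - 2 < C.deg D)
    (hm : (m : ℤ) = C.deg D - C.genus + 1) : Module.finrank k (C.RR D) = m := by
  have h := C.rank_RR D h2
  have : (Module.finrank k (C.RR D) : ℤ) = (m : ℤ) := by rw [h, hm]; rfl
  exact_mod_cast this

end AbstractCurveAux
/-- View an `N × N` matrix, `N = e + n`, as a block matrix indexed by `Fin e ⊕ Fin n`
(upper-left block of size `e × e`, lower-right block of size `n × n`). -/
def asBlocks {R : Type} {N e n : ℕ} (h : N = e + n)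
    (M : Matrix (Fin N) (Fin N) R) : Matrix (Fin e ⊕ Fin n) (Fin e ⊕ Fin n) R :=
  M.submatrix (fun p => (finCongr h.symm) (finSumFinEquiv p))
    (fun p => (finCongr h.symm) (finSumFinEquiv p))

/-- Given a block decomposition `[[a, b], [c, d]]` of `M` (with `N = e + n`), the
compressed block
`z` from `[[w, x], [y, z]] = [[1, 0], [-(ρc)(ρa)⁻¹, 1]] · [[a, b], [c, d]] · [[1, -(ρa)⁻¹(ρb)], [0, 1]]`,
where `ρ` is applied entrywise to the blocks `a`, `b`, `c`. -/
noncomputable def compressedBlock {k : Type} [Field k] {F : Type} [Field F] [Algebra k F]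
    {N e n : ℕ} (h : N = e + n) (M : Matrix (Fin N) (Fin N) F) (ρ : F →ₗ[k] k) :
    Matrix (Fin n) (Fin n) F :=
  let B := asBlocks h M
  let a := B.toBlocks₁₁
  let b := B.toBlocks₁₂
  let c := B.toBlocks₂₁
  ((Matrix.fromBlocks 1 0 (-(c.map ρ * (a.map ρ)⁻¹)) 1).map (algebraMap k F) * B *
    (Matrix.fromBlocks 1 (-((a.map ρ)⁻¹ * b.map ρ)) 0 1).map (algebraMap k F)).toBlocks₂₂
open AbstractCurve in
/-- In the compression situation (`deg G = 2s` even, `E > 0`,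
`s - deg E ≥ 2g`, `n = s - deg E - g + 1`, `n' = n + deg E`, `ρ` an `E`-compression
functional, `D` of degree `s`, `X` a `G`-form representing `D`), for **any** `n' × n'`
permutation matrices `P`, `Q` such that in `P X Q = [[a, b], [c, d]]` (`a` of size
`deg E × deg E`) the matrix `ρ a` has nonzero determinant, the block `z` defined by
`[[w, x], [y, z]] = [[1, 0], [-(ρc)(ρa)⁻¹, 1]] · [[a, b], [c, d]] · [[1, -(ρa)⁻¹(ρb)], [0, 1]]`
is a `(G - 2E)`-form representing `D - E`. -/
theorem compression_block_gform (k : Type) [Field k] [IsAlgClosed k]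
    (C : AbstractCurve k) (G E : C.Point →₀ ℤ) (s : ℤ)
    (hG : C.deg G = 2 * s) (hE : 0 ≤ E) (hE0 : E ≠ 0)
    (hge : 2 * (C.genus : ℤ) ≤ s - C.deg E)
    (e n n' : ℕ) (he : (e : ℤ) = C.deg E)
    (hn : (n : ℤ) = s - C.deg E - C.genus + 1) (hn' : n' = e + n)
    (ρ : C.F →ₗ[k] k) (hρ : C.IsCompression G E ρ)
    (D : C.Point →₀ ℤ) (hD : C.deg D = s)
    (X : Matrix (Fin n') (Fin n') C.F) (hX : C.IsGForm G X) (hXD : C.Represents G D X)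
    (σ τ : Equiv.Perm (Fin n'))
    (hdet : ((asBlocks hn' (X.submatrix σ τ)).toBlocks₁₁.map ρ).det ≠ 0) :
    C.IsGForm (G - 2 • E) (compressedBlock hn' (X.submatrix σ τ) ρ) ∧
      C.Represents (G - 2 • E) (D - E) (compressedBlock hn' (X.submatrix σ τ) ρ) := by
  classical
  obtain ⟨hXG, hXmin, hXgen⟩ := hX
  obtain ⟨u, v, hu, hsu, hv, hsv, hXuv⟩ := hXD
  set ι : Fin e ⊕ Fin n → Fin n' := fun p => (finCongr hn'.symm) (finSumFinEquiv p) with hιdef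
  set u' : Fin e ⊕ Fin n → C.F := fun p => u (σ (ι p)) with hu'def
  set v' : Fin e ⊕ Fin n → C.F := fun p => v (τ (ι p)) with hv'def
  have hιinj : Function.Injective ι := fun p q h =>
    finSumFinEquiv.injective ((finCongr hn'.symm).injective h)
  have hu'li : LinearIndependent k u' :=
    hu.comp (fun p => σ (ι p)) (fun p q h => hιinj (σ.injective h))
  have hv'li : LinearIndependent k v' :=
    hv.comp (fun p => τ (ι p)) (fun p q h => hιinj (τ.injective h))
  have hB : ∀ p q, asBlocks hn' (X.submatrix σ τ) p q = u' p * v' q := by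
    intro p q
    simp only [asBlocks, Matrix.submatrix_apply, hXuv]
    try rfl
  set A : Matrix (Fin e) (Fin e) k := ((asBlocks hn' (X.submatrix σ τ)).toBlocks₁₁).map ρ with hAdef
  set Bm : Matrix (Fin e) (Fin n) k := ((asBlocks hn' (X.submatrix σ τ)).toBlocks₁₂).map ρ with hBmdef
  set Cm : Matrix (Fin n) (Fin e) k := ((asBlocks hn' (X.submatrix σ τ)).toBlocks₂₁).map ρ with hCmdef
  have hAunit : IsUnit A.det := isUnit_iff_ne_zero.mpr hdet
  have hAentry : ∀ i j, A i j = ρ (u' (Sum.inl i) * v' (Sum.inl j)) := by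
    intro i j
    simp only [hAdef, Matrix.map_apply, Matrix.toBlocks₁₁, Matrix.of_apply, hB]
  have hBmentry : ∀ i j, Bm i j = ρ (u' (Sum.inl i) * v' (Sum.inr j)) := by
    intro i j
    simp only [hBmdef, Matrix.map_apply, Matrix.toBlocks₁₂, Matrix.of_apply, hB]
  have hCmentry : ∀ i j, Cm i j = ρ (u' (Sum.inr i) * v' (Sum.inl j)) := by
    intro i j
    simp only [hCmdef, Matrix.map_apply, Matrix.toBlocks₂₁, Matrix.of_apply, hB]
  set M1 : Matrix (Fin n) (Fin e) k := Cm * A⁻¹ with hM1def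
  set M2 : Matrix (Fin e) (Fin n) k := A⁻¹ * Bm with hM2def
  have hMA : M1 * A = Cm := by
    rw [hM1def, Matrix.mul_assoc, Matrix.nonsing_inv_mul A hAunit, Matrix.mul_one]
  have hAM : A * M2 = Bm := by
    rw [hM2def, ← Matrix.mul_assoc, Matrix.mul_nonsing_inv A hAunit, Matrix.one_mul]
  set U : Fin n → C.F := fun i => u' (Sum.inr i) - ∑ j, M1 i j • u' (Sum.inl j) with hUdef
  set V : Fin n → C.F := fun j => v' (Sum.inr j) - ∑ i, M2 i j • v' (Sum.inl i) with hVdef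
  have hBof : asBlocks hn' (X.submatrix σ τ) = Matrix.of (fun p q => u' p * v' q) := by
    ext p q; exact hB p q
  have hZ : compressedBlock hn' (X.submatrix σ τ) ρ = Matrix.of (fun i j => U i * V j) := by
    ext i j
    show ((Matrix.fromBlocks 1 0 (-(Cm * A⁻¹)) 1).map (algebraMap k C.F) *
        asBlocks hn' (X.submatrix σ τ) *
        (Matrix.fromBlocks 1 (-(A⁻¹ * Bm)) 0 1).map (algebraMap k C.F)).toBlocks₂₂ i j = _
    rw [Matrix.toBlocks₂₂]
    simp only [Matrix.of_apply]
    rw [hBof, AbstractCurveAux.rank_one_conj]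
    congr 1
    · rw [Fintype.sum_sum_type]
      simp only [Matrix.fromBlocks_apply₂₁, Matrix.fromBlocks_apply₂₂, Matrix.neg_apply,
        Matrix.one_apply, map_neg, neg_mul, apply_ite (algebraMap k C.F), map_one, map_zero,
        ite_mul, one_mul, zero_mul, Finset.sum_ite_eq, Finset.mem_univ, if_true]
      simp only [hUdef, ← Algebra.smul_def, ← hM1def]
      rw [Finset.sum_neg_distrib]
      abel
    · rw [Fintype.sum_sum_type]
      simp only [Matrix.fromBlocks_apply₁₂, Matrix.fromBlocks_apply₂₂, Matrix.neg_apply,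
        Matrix.one_apply, map_neg, mul_neg, apply_ite (algebraMap k C.F), map_one, map_zero,
        mul_ite, mul_one, mul_zero, Finset.sum_ite_eq', Finset.mem_univ, if_true]
      simp only [hVdef, ← Algebra.commutes, ← Algebra.smul_def, ← hM2def]
      rw [Finset.sum_neg_distrib]
      abel
  have hUv1 : ∀ i jj, ρ (U i * v' (Sum.inl jj)) = 0 := by
    intro i jj
    have hexp : U i * v' (Sum.inl jj)
        = u' (Sum.inr i) * v' (Sum.inl jj)
          - ∑ j', M1 i j' • (u' (Sum.inl j') * v' (Sum.inl jj)) := by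
      rw [hUdef]
      rw [sub_mul, Finset.sum_mul]
      simp only [smul_mul_assoc]
    rw [hexp, map_sub, map_sum]
    simp only [map_smul, smul_eq_mul, ← hAentry]
    rw [← hCmentry]
    have h1 : ∑ j', M1 i j' * A j' jj = Cm i jj := by rw [← Matrix.mul_apply, hMA]
    rw [h1, sub_self]
  have hU1v : ∀ ii j, ρ (u' (Sum.inl ii) * V j) = 0 := by
    intro ii j
    have hexp : u' (Sum.inl ii) * V j
        = u' (Sum.inl ii) * v' (Sum.inr j)
          - ∑ i', M2 i' j • (u' (Sum.inl ii) * v' (Sum.inl i')) := by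
      rw [hVdef]
      rw [mul_sub, Finset.mul_sum]
      simp only [mul_smul_comm]
    rw [hexp, map_sub, map_sum]
    simp only [map_smul, smul_eq_mul, ← hAentry]
    rw [← hBmentry]
    have h1 : ∑ i', M2 i' j * A ii i' = Bm ii j := by
      rw [← hAM, Matrix.mul_apply]
      exact Finset.sum_congr rfl fun i' _ => mul_comm _ _
    rw [h1, sub_self]
  have hu'D : ∀ p, u' p ∈ C.RR D := by
    intro p; rw [← hsu]; exact Submodule.subset_span ⟨σ (ι p), rfl⟩
  have hv'GD : ∀ p, v' p ∈ C.RR (G - D) := by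
    intro p; rw [← hsv]; exact Submodule.subset_span ⟨τ (ι p), rfl⟩
  have hUD : ∀ i, U i ∈ C.RR D := by
    intro i
    rw [hUdef]
    exact sub_mem (hu'D _) (Submodule.sum_mem _ fun j _ => Submodule.smul_mem _ _ (hu'D _))
  have hVGD : ∀ j, V j ∈ C.RR (G - D) := by
    intro j
    rw [hVdef]
    exact sub_mem (hv'GD _) (Submodule.sum_mem _ fun i _ => Submodule.smul_mem _ _ (hv'GD _))
  have key1 : ∀ f ∈ C.RR D, ∀ g ∈ C.RR (G - D - E), ρ (f * g) = 0 := by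
    intro f hf g hg
    apply hρ.1
    have h := AbstractCurveAux.mul_mem_RR C hf hg
    rwa [show D + (G - D - E) = G - E by abel] at h
  have key2 : ∀ f ∈ C.RR (D - E), ∀ g ∈ C.RR (G - D), ρ (f * g) = 0 := by
    intro f hf g hg
    apply hρ.1
    have h := AbstractCurveAux.mul_mem_RR C hf hg
    rwa [show (D - E) + (G - D) = G - E by abel] at h
  have hcomp := hρ.2 D (by rw [hD, hG])
  have hrkQ1 : Module.finrank k
      (C.RR D ⧸ Submodule.comap (C.RR D).subtype (C.RR (D - E))) = e := by
    exact_mod_cast hcomp.2.2.1.trans he.symm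
  have hrkQ2 : Module.finrank k
      (C.RR (G - D) ⧸ Submodule.comap (C.RR (G - D)).subtype (C.RR (G - D - E))) = e := by
    exact_mod_cast hcomp.2.2.2.trans he.symm
  haveI := C.finite_RR D
  haveI := C.finite_RR (G - D)
  haveI := C.finite_RR (D - E)
  haveI := C.finite_RR (G - D - E)
  have hspanv : ∀ b ∈ C.RR (G - D),
      ∃ c : Fin e → k, b - ∑ j, c j • v' (Sum.inl j) ∈ C.RR (G - D - E) := by
    intro b hb
    refine AbstractCurveAux.span_mod (C.RR (G - D)) (C.RR (G - D - E)) hrkQ2 _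
      (fun j => hv'GD _) ?_ hb
    intro c hc j
    have hA0 : A.mulVec c = 0 := by
      funext i
      have h0 : ρ (u' (Sum.inl i) * ∑ j', c j' • v' (Sum.inl j')) = 0 := by
        apply hρ.1
        have h := AbstractCurveAux.mul_mem_RR C (hu'D (Sum.inl i)) hc
        rwa [show D + (G - D - E) = G - E by abel] at h
      rw [Finset.mul_sum] at h0
      simp only [mul_smul_comm] at h0
      rw [map_sum] at h0
      simp only [map_smul, smul_eq_mul, ← hAentry] at h0
      simpa [Matrix.mulVec, dotProduct, mul_comm] using h0
    have h2 := congrArg (fun w => A⁻¹.mulVec w) hA0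
    simpa [Matrix.mulVec_mulVec, Matrix.nonsing_inv_mul A hAunit, Matrix.one_mulVec,
      Matrix.mulVec_zero] using congrFun h2 j
  have hspanu : ∀ b ∈ C.RR D,
      ∃ c : Fin e → k, b - ∑ i, c i • u' (Sum.inl i) ∈ C.RR (D - E) := by
    intro b hb
    refine AbstractCurveAux.span_mod (C.RR D) (C.RR (D - E)) hrkQ1 _
      (fun i => hu'D _) ?_ hb
    intro c hc i
    have hA0 : Matrix.vecMul c A = 0 := by
      funext j
      have h0 : ρ ((∑ i', c i' • u' (Sum.inl i')) * v' (Sum.inl j)) = 0 := by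
        apply hρ.1
        have h := AbstractCurveAux.mul_mem_RR C hc (hv'GD (Sum.inl j))
        rwa [show (D - E) + (G - D) = G - E by abel] at h
      rw [Finset.sum_mul] at h0
      simp only [smul_mul_assoc] at h0
      rw [map_sum] at h0
      simp only [map_smul, smul_eq_mul, ← hAentry] at h0
      simpa [Matrix.vecMul, dotProduct] using h0
    have h2 := congrArg (fun w => Matrix.vecMul w A⁻¹) hA0
    simpa [Matrix.vecMul_vecMul, Matrix.mul_nonsing_inv A hAunit, Matrix.vecMul_one,
      Matrix.zero_vecMul] using congrFun h2 i
  have hUmem : ∀ i, U i ∈ C.RR (D - E) := by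
    intro i
    refine hcomp.1 (U i) (hUD i) (fun b hb => ?_)
    obtain ⟨c, hc⟩ := hspanv b hb
    have hsplit : U i * b
        = U i * (b - ∑ j, c j • v' (Sum.inl j)) + ∑ j, c j • (U i * v' (Sum.inl j)) := by
      rw [mul_sub, Finset.mul_sum]
      simp only [mul_smul_comm]
      ring
    rw [hsplit, map_add, map_sum, key1 (U i) (hUD i) _ hc]
    simp only [map_smul, hUv1, smul_eq_mul, mul_zero, Finset.sum_const_zero, add_zero]
  have hVmem : ∀ j, V j ∈ C.RR (G - D - E) := by
    intro j
    refine hcomp.2.1 (V j) (hVGD j) (fun b hb => ?_)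
    obtain ⟨c, hc⟩ := hspanu b hb
    have hsplit : b * V j
        = (b - ∑ i, c i • u' (Sum.inl i)) * V j + ∑ i, c i • (u' (Sum.inl i) * V j) := by
      rw [sub_mul, Finset.sum_mul]
      simp only [smul_mul_assoc]
      ring
    rw [hsplit, map_add, map_sum, key2 _ hc (V j) (hVGD j)]
    simp only [map_smul, hU1v, smul_eq_mul, mul_zero, Finset.sum_const_zero, add_zero]
  have hUli : LinearIndependent k U := by
    rw [Fintype.linearIndependent_iff]
    intro c hc i
    have hrw : ∑ i', c i' • U i'
        = ∑ p, (Sum.elim (fun j => -∑ i', c i' * M1 i' j) c) p • u' p := by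
      rw [Fintype.sum_sum_type]
      simp only [Sum.elim_inl, Sum.elim_inr, neg_smul, Finset.sum_smul,
        Finset.sum_neg_distrib, hUdef, smul_sub, Finset.smul_sum, smul_smul]
      rw [Finset.sum_sub_distrib, Finset.sum_comm]
      abel
    have h := Fintype.linearIndependent_iff.mp hu'li _ (hrw.symm.trans hc)
    simpa using h (Sum.inr i)
  have hVli : LinearIndependent k V := by
    rw [Fintype.linearIndependent_iff]
    intro c hc j
    have hrw : ∑ j', c j' • V j'
        = ∑ p, (Sum.elim (fun i => -∑ j', c j' * M2 i j') c) p • v' p := by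
      rw [Fintype.sum_sum_type]
      simp only [Sum.elim_inl, Sum.elim_inr, neg_smul, Finset.sum_smul,
        Finset.sum_neg_distrib, hVdef, smul_sub, Finset.smul_sum, smul_smul]
      rw [Finset.sum_sub_distrib, Finset.sum_comm]
      abel
    have h := Fintype.linearIndependent_iff.mp hv'li _ (hrw.symm.trans hc)
    simpa using h (Sum.inr j)
  have hdegDE : C.deg (D - E) = s - e := by
    rw [AbstractCurveAux.deg_sub, hD, ← he]
  have hdegGDE : C.deg (G - D - E) = s - e := by
    rw [AbstractCurveAux.deg_sub, AbstractCurveAux.deg_sub, hG, hD, ← he]; ring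
  have hgen0 : (0 : ℤ) ≤ C.genus := Int.natCast_nonneg _
  have hee : (e : ℤ) = C.deg E := he
  have hrkDE : Module.finrank k (C.RR (D - E)) = n := by
    refine AbstractCurveAux.finrank_RR_eq C ?_ ?_
    · rw [hdegDE]; linarith
    · rw [hdegDE, hn, hee]
  have hrkGDE : Module.finrank k (C.RR (G - D - E)) = n := by
    refine AbstractCurveAux.finrank_RR_eq C ?_ ?_
    · rw [hdegGDE]; linarith
    · rw [hdegGDE, hn, hee]
  have hspanU : Submodule.span k (Set.range U) = C.RR (D - E) := by
    apply Submodule.eq_of_le_of_finrank_le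
    · rw [Submodule.span_le]; rintro x ⟨i, rfl⟩; exact hUmem i
    · rw [finrank_span_eq_card hUli, Fintype.card_fin, hrkDE]
  have hspanV : Submodule.span k (Set.range V) = C.RR (G - D - E) := by
    apply Submodule.eq_of_le_of_finrank_le
    · rw [Submodule.span_le]; rintro x ⟨j, rfl⟩; exact hVmem j
    · rw [finrank_span_eq_card hVli, Fintype.card_fin, hrkGDE]
  have hn0 : 0 < n := by
    have h1 : (1 : ℤ) ≤ (n : ℤ) := by rw [hn]; linarith
    exact_mod_cast h1
  rw [hZ]
  constructor
  · refine ⟨?_, ?_, ?_, ?_⟩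
    · intro i j
      simp only [Matrix.of_apply]
      have h := AbstractCurveAux.mul_mem_RR C (hUmem i) (hVmem j)
      rwa [show (D - E) + (G - D - E) = G - 2 • E by abel] at h
    · intro i i' j j'
      simp only [Matrix.of_apply]; ring
    · refine ⟨⟨0, hn0⟩, ?_⟩
      have hne : U ⟨0, hn0⟩ ≠ 0 := hUli.ne_zero _
      have hker : LinearMap.ker (LinearMap.mulLeft k (U ⟨0, hn0⟩)) = ⊥ := by
        rw [LinearMap.ker_eq_bot']
        intro m hm
        rw [LinearMap.mulLeft_apply] at hm
        rcases mul_eq_zero.mp hm with h | h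
        · exact absurd h hne
        · exact h
      exact hVli.map' (LinearMap.mulLeft k (U ⟨0, hn0⟩)) hker
    · refine ⟨⟨0, hn0⟩, ?_⟩
      have hne : V ⟨0, hn0⟩ ≠ 0 := hVli.ne_zero _
      have hker : LinearMap.ker (LinearMap.mulRight k (V ⟨0, hn0⟩)) = ⊥ := by
        rw [LinearMap.ker_eq_bot']
        intro m hm
        rw [LinearMap.mulRight_apply] at hm
        rcases mul_eq_zero.mp hm with h | h
        · exact h
        · exact absurd h hne
      exact hUli.map' (LinearMap.mulRight k (V ⟨0, hn0⟩)) hker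
  · refine ⟨U, V, hUli, hspanU, hVli, ?_, fun i j => rfl⟩
    rw [show G - 2 • E - (D - E) = G - D - E by abel]
    exact hspanV
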